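/- Let p be a prime, n, m, l ≥ 1, R = GR(p^n,m) = (ZMod (p^n))[X]/(f) for a monic basic irreducible f of degree m, ρ ∈ R[X] monic of degree l with reduction modulo (p) irreducible over R/(p), and S = R[X]/(ρ). Then there exists β ∈ S with β^{p^{ml} − 1} = 1 such that the family (1, β, β², …, β^{l−1}) is a basis of S as a free R-module; in particular, an R-basis of S can be chosen inside the Teichmüller set of S. -/

import Mathlib

open Polynomial

section AuxGR

lemma auxPowZero {T : Type*} [CommRing T] (p n : ℕ) (g : ZMod (p ^ n) →+* T) :
    (p : T) ^ n = 0 := by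
  have h : ((p ^ n : ℕ) : T) = 0 := by
    rw [← map_natCast g, ZMod.natCast_self, map_zero]
  push_cast at h
  exact h

lemma auxKerCastHom (p n : ℕ) (hp : p.Prime) (hn : 0 < n) :
    RingHom.ker (ZMod.castHom (dvd_pow_self p hn.ne') (ZMod p)) =
      Ideal.span {(p : ZMod (p ^ n))} := by
  haveI : NeZero (p ^ n) := ⟨pow_ne_zero n hp.pos.ne'⟩
  haveI : NeZero p := ⟨hp.pos.ne'⟩
  ext x
  rw [RingHom.mem_ker, Ideal.mem_span_singleton]
  constructor
  · intro h
    have hval : ((x.val : ℕ) : ZMod p) = 0 := by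
      rw [ZMod.natCast_val]
      rwa [ZMod.castHom_apply] at h
    obtain ⟨c, hc⟩ := (ZMod.natCast_eq_zero_iff _ _).mp hval
    refine ⟨(c : ZMod (p ^ n)), ?_⟩
    have : ((x.val : ℕ) : ZMod (p ^ n)) = x := ZMod.natCast_zmod_val x
    rw [← this, hc]
    push_cast
    ring
  · rintro ⟨c, rfl⟩
    rw [map_mul, map_natCast, ZMod.natCast_self, zero_mul]

lemma auxSurjCastHom (p n : ℕ) (hp : p.Prime) (hn : 0 < n) :
    Function.Surjective (ZMod.castHom (dvd_pow_self p hn.ne') (ZMod p)) := by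
  haveI : NeZero p := ⟨hp.pos.ne'⟩
  intro y
  exact ⟨(y.val : ZMod (p ^ n)), by rw [map_natCast, ZMod.natCast_zmod_val]⟩

variable {A F : Type*} [CommRing A] [Field F] (φ : A →+* F) (g : Polynomial A)

/-- The induced map `A[X]/(g) → F[X]/(g mod p)` for a residue map `φ : A → F`. -/
noncomputable def auxResMap : AdjoinRoot g →+* AdjoinRoot (g.map φ) :=
  AdjoinRoot.lift ((AdjoinRoot.of (g.map φ)).comp φ) (AdjoinRoot.root (g.map φ)) (by
    rw [← Polynomial.eval₂_map]
    exact AdjoinRoot.eval₂_root (g.map φ))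

lemma auxResMap_mk (q : Polynomial A) :
    auxResMap φ g (AdjoinRoot.mk g q) = AdjoinRoot.mk (g.map φ) (q.map φ) := by
  rw [auxResMap, AdjoinRoot.lift_mk, ← AdjoinRoot.aeval_eq, Polynomial.aeval_def,
    Polynomial.eval₂_map]
  rfl

lemma auxResMap_surjective (hφ : Function.Surjective φ) :
    Function.Surjective (auxResMap φ g) := by
  intro y
  obtain ⟨r, rfl⟩ := AdjoinRoot.mk_surjective y
  obtain ⟨q, rfl⟩ := Polynomial.map_surjective φ hφ r
  exact ⟨AdjoinRoot.mk g q, auxResMap_mk φ g q⟩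

lemma auxResMap_ker (p : ℕ) (hφ : Function.Surjective φ)
    (hker : RingHom.ker φ = Ideal.span {(p : A)}) :
    RingHom.ker (auxResMap φ g) = Ideal.span {(p : AdjoinRoot g)} := by
  have hp0 : φ (p : A) = 0 := by
    rw [← RingHom.mem_ker, hker]
    exact Ideal.mem_span_singleton.mpr dvd_rfl
  ext y
  constructor
  · intro hy
    obtain ⟨q, rfl⟩ := AdjoinRoot.mk_surjective y
    rw [RingHom.mem_ker, auxResMap_mk, AdjoinRoot.mk_eq_zero] at hy
    obtain ⟨r, hr⟩ := hy
    obtain ⟨r₀, rfl⟩ := Polynomial.map_surjective φ hφ r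
    have hmap0 : (q - g * r₀).map φ = 0 := by
      rw [Polynomial.map_sub, Polynomial.map_mul, hr, sub_self]
    have hdvd : Polynomial.C (p : A) ∣ q - g * r₀ := by
      rw [Polynomial.C_dvd_iff_dvd_coeff]
      intro i
      rw [← Ideal.mem_span_singleton, ← hker, RingHom.mem_ker, ← Polynomial.coeff_map,
        hmap0, Polynomial.coeff_zero]
    obtain ⟨c, hc⟩ := hdvd
    have hmk : AdjoinRoot.mk g q = (p : AdjoinRoot g) * AdjoinRoot.mk g c := by
      have h1 : AdjoinRoot.mk g q = AdjoinRoot.mk g (q - g * r₀) := by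
        rw [map_sub, map_mul, AdjoinRoot.mk_self, zero_mul, sub_zero]
      rw [h1, hc, map_mul, AdjoinRoot.mk_C, map_natCast]
    rw [Ideal.mem_span_singleton, hmk]
    exact Dvd.intro _ rfl
  · intro hy
    obtain ⟨d, hd⟩ := Ideal.mem_span_singleton.mp hy
    have hp0' : ((p : ℕ) : AdjoinRoot (g.map φ)) = 0 := by
      rw [← map_natCast (AdjoinRoot.of (g.map φ)), ← map_natCast φ, hp0, map_zero]
    rw [RingHom.mem_ker, hd, map_mul, map_natCast, hp0', zero_mul]

lemma auxResMap_card [Finite A] (hφ : Function.Surjective φ) (hg : g.Monic) :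
    Nat.card (AdjoinRoot (g.map φ)) = Nat.card F ^ g.natDegree := by
  haveI : Finite F := Finite.of_surjective φ hφ
  haveI : Module.Finite F (AdjoinRoot (g.map φ)) :=
    Module.Finite.of_basis (AdjoinRoot.powerBasis' (hg.map φ)).basis
  haveI : Finite (AdjoinRoot (g.map φ)) := Module.finite_of_finite F
  letI : Fintype F := Fintype.ofFinite F
  letI : Fintype (AdjoinRoot (g.map φ)) := Fintype.ofFinite _
  rw [Nat.card_eq_fintype_card, Nat.card_eq_fintype_card, Module.card_eq_pow_finrank (K := F),
    (AdjoinRoot.powerBasis' (hg.map φ)).finrank, AdjoinRoot.powerBasis'_dim, hg.natDegree_map]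

lemma auxIrrTransport (p : ℕ) (hφ : Function.Surjective φ)
    (hker : RingHom.ker φ = Ideal.span {(p : A)})
    (h : Irreducible (g.map (Ideal.Quotient.mk (Ideal.span {(p : A)})))) :
    Irreducible (g.map φ) := by
  let e : (A ⧸ Ideal.span {(p : A)}) ≃+* F :=
    (Ideal.quotEquivOfEq hker.symm).trans (RingHom.quotientKerEquivOfSurjective hφ)
  have hcomp : (e : (A ⧸ Ideal.span {(p : A)}) →+* F).comp
      (Ideal.Quotient.mk (Ideal.span {(p : A)})) = φ := by
    ext x
    simp only [RingHom.comp_apply, RingHom.coe_coe]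
    show e (Ideal.Quotient.mk _ x) = φ x
    simp only [e, RingEquiv.coe_trans, Function.comp_apply, Ideal.quotEquivOfEq_mk]
    exact RingHom.kerLift_mk φ x
  have hrw : g.map φ
      = Polynomial.mapEquiv e (g.map (Ideal.Quotient.mk (Ideal.span {(p : A)}))) := by
    rw [Polynomial.mapEquiv_apply, Polynomial.map_map, hcomp]
  rw [hrw]
  exact (MulEquiv.irreducible_iff (Polynomial.mapEquiv e).toMulEquiv).mpr h

end AuxGR

set_option maxHeartbeats 1000000 in
/-- Let `R = GR(p^n, m)` and `S = R[X]/(ρ) = GR(p^n, m*l)` for a monic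
`ρ` of degree `l` whose reduction mod `(p)` is irreducible over `R/(p)`. Then there is a
`β ∈ S` with `β ^ (p^(m*l) - 1) = 1` (a nonzero Teichmüller element) such that
`(1, β, β², …, β^(l-1))` is an `R`-basis of `S`. -/
theorem galois_ring_teichmuller_basis (p n m l : ℕ) (hp : p.Prime)
    (hn : 0 < n) (hm : 0 < m) (hl : 0 < l)
    (f : Polynomial (ZMod (p ^ n))) (hf : f.Monic) (hdeg : f.natDegree = m)
    (hirr : Irreducible (f.map (ZMod.castHom (dvd_pow_self p hn.ne') (ZMod p))))
    (ρ : Polynomial (AdjoinRoot f)) (hρ : ρ.Monic) (hρdeg : ρ.natDegree = l)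
    (hρirr : Irreducible
      (ρ.map (Ideal.Quotient.mk (Ideal.span {(p : AdjoinRoot f)})))) :
    ∃ β : AdjoinRoot ρ, β ^ (p ^ (m * l) - 1) = 1 ∧
      ∃ b : Module.Basis (Fin l) (AdjoinRoot f) (AdjoinRoot ρ), ∀ i : Fin l, b i = β ^ (i : ℕ) := by
  classical
  haveI : NeZero (p ^ n) := ⟨pow_ne_zero n hp.pos.ne'⟩
  haveI : Fact p.Prime := ⟨hp⟩
  -- the power basis of `S = AdjoinRoot ρ` over `R = AdjoinRoot f`
  let pb := AdjoinRoot.powerBasis' hρ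
  let b0 : Module.Basis (Fin l) (AdjoinRoot f) (AdjoinRoot ρ) := pb.basis.reindex (finCongr hρdeg)
  have hb0 : ∀ i : Fin l, b0 i = (AdjoinRoot.root ρ) ^ (i : ℕ) := by
    intro i
    rw [Module.Basis.reindex_apply, pb.basis_eq_pow]
    simp [pb]
    rfl
  -- the trivial case `l = 1`
  by_cases hl2 : 2 ≤ l
  swap
  · have hl1 : l = 1 := by omega
    subst hl1
    refine ⟨1, one_pow _, b0, ?_⟩
    intro i
    have hi : (i : ℕ) = 0 := by omega
    rw [hb0 i, hi]
    simp
  -- residue fields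
  have hker0 := auxKerCastHom p n hp hn
  have hsurj0 := auxSurjCastHom p n hp hn
  haveI : Fact (Irreducible (f.map (ZMod.castHom (dvd_pow_self p hn.ne') (ZMod p)))) := ⟨hirr⟩
  let ψR : AdjoinRoot f →+* AdjoinRoot (f.map (ZMod.castHom (dvd_pow_self p hn.ne') (ZMod p))) :=
    auxResMap _ f
  have hψRsurj : Function.Surjective ψR := auxResMap_surjective _ f hsurj0
  have hψRker : RingHom.ker ψR = Ideal.span {(p : AdjoinRoot f)} :=
    auxResMap_ker _ f p hsurj0 hker0
  haveI : Module.Finite (ZMod (p ^ n)) (AdjoinRoot f) :=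
    Module.Finite.of_basis (AdjoinRoot.powerBasis' hf).basis
  haveI : Finite (AdjoinRoot f) := Module.finite_of_finite (ZMod (p ^ n))
  have hρirr1 : Irreducible (ρ.map ψR) := auxIrrTransport ψR ρ p hψRsurj hψRker hρirr
  haveI : Fact (Irreducible (ρ.map ψR)) := ⟨hρirr1⟩
  let ψS : AdjoinRoot ρ →+* AdjoinRoot (ρ.map ψR) := auxResMap ψR ρ
  have hψSsurj : Function.Surjective ψS := auxResMap_surjective ψR ρ hψRsurj
  have hψSker : RingHom.ker ψS = Ideal.span {(p : AdjoinRoot ρ)} :=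
    auxResMap_ker ψR ρ p hψRsurj hψRker
  -- cardinality of the top residue field
  haveI : Finite (AdjoinRoot (f.map (ZMod.castHom (dvd_pow_self p hn.ne') (ZMod p)))) :=
    Finite.of_surjective ψR hψRsurj
  haveI : Module.Finite (AdjoinRoot (f.map (ZMod.castHom (dvd_pow_self p hn.ne') (ZMod p))))
      (AdjoinRoot (ρ.map ψR)) :=
    Module.Finite.of_basis (AdjoinRoot.powerBasis' (hρ.map ψR)).basis
  haveI : Finite (AdjoinRoot (ρ.map ψR)) :=
    Module.finite_of_finite (AdjoinRoot (f.map (ZMod.castHom (dvd_pow_self p hn.ne') (ZMod p))))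
  letI : Fintype (AdjoinRoot (ρ.map ψR)) := Fintype.ofFinite _
  have hcardF1 : Nat.card (AdjoinRoot (f.map (ZMod.castHom (dvd_pow_self p hn.ne') (ZMod p))))
      = p ^ m := by
    rw [auxResMap_card _ f hsurj0 hf, Nat.card_zmod, hdeg]
  have hcardF2 : Fintype.card (AdjoinRoot (ρ.map ψR)) = p ^ (m * l) := by
    rw [← Nat.card_eq_fintype_card, auxResMap_card ψR ρ hψRsurj hρ, hcardF1, hρdeg, ← pow_mul]
  -- nilpotency of `p`
  have hpS : (p : AdjoinRoot ρ) ^ n = 0 :=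
    auxPowZero p n ((AdjoinRoot.of ρ).comp (AdjoinRoot.of f))
  have hpR : (p : AdjoinRoot f) ^ n = 0 := auxPowZero p n (AdjoinRoot.of f)
  -- the Teichmüller element
  set x := AdjoinRoot.root ρ with hxdef
  set q := p ^ (m * l) with hqdef
  have hq1 : 1 ≤ q := Nat.one_le_pow _ _ hp.pos
  set β := x ^ (p ^ (m * l * n)) with hβdef
  have hxq : (p : AdjoinRoot ρ) ∣ x ^ q - x := by
    rw [← Ideal.mem_span_singleton, ← hψSker, RingHom.mem_ker, map_sub, map_pow]
    have hfrob := FiniteField.pow_card (ψS x)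
    rw [hcardF2] at hfrob
    rw [hfrob, sub_self]
  have hβq : β ^ q = β := by
    have hdvd := dvd_sub_pow_of_dvd_sub hxq (m * l * n)
    have hzero : (p : AdjoinRoot ρ) ^ (m * l * n + 1) = 0 := by
      have hle : n ≤ m * l * n + 1 :=
        le_trans (Nat.le_mul_of_pos_left n (Nat.mul_pos hm hl)) (Nat.le_succ _)
      calc (p : AdjoinRoot ρ) ^ (m * l * n + 1)
          = (p : AdjoinRoot ρ) ^ n * (p : AdjoinRoot ρ) ^ (m * l * n + 1 - n) := by
            rw [← pow_add, Nat.add_sub_cancel' hle]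
        _ = 0 := by rw [hpS, zero_mul]
    rw [hzero, zero_dvd_iff, sub_eq_zero] at hdvd
    calc β ^ q = (x ^ q) ^ p ^ (m * l * n) := by
          rw [hβdef, ← pow_mul, ← pow_mul, mul_comm]
      _ = x ^ p ^ (m * l * n) := hdvd
      _ = β := hβdef.symm
  have hβx : ψS β = ψS x := by
    rw [hβdef, map_pow]
    have hexp : p ^ (m * l * n) = q ^ n := by rw [hqdef, pow_mul]
    have hfrob := FiniteField.pow_card_pow n (ψS x)
    rw [hcardF2] at hfrob
    rw [hexp, hfrob]
  -- `x` is nonzero modulo `p`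
  have hne : ψS x ≠ 0 := by
    intro h0
    have hmem : x ∈ Ideal.span {(p : AdjoinRoot ρ)} := by
      rw [← hψSker]; exact h0
    obtain ⟨s, hs⟩ := Ideal.mem_span_singleton.mp hmem
    have hsm : x = (p : AdjoinRoot f) • s := by
      rw [Algebra.smul_def, map_natCast]; exact hs
    set i1 : Fin l := ⟨1, by omega⟩ with hi1
    have h1 : b0.repr x i1 = 1 := by
      have hx1 : x = b0 i1 := by rw [hb0 i1]; norm_num
      rw [hx1, b0.repr_self, Finsupp.single_eq_same]
    have h2 : b0.repr x i1 = (p : AdjoinRoot f) * b0.repr s i1 := by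
      rw [hsm, map_smul, Finsupp.smul_apply, smul_eq_mul]
    have hpu : IsUnit (p : AdjoinRoot f) :=
      IsUnit.of_mul_eq_one _ (h2.symm.trans h1)
    have him : ψR (p : AdjoinRoot f) = 0 := by
      rw [← RingHom.mem_ker, hψRker]
      exact Ideal.mem_span_singleton.mpr dvd_rfl
    have := hpu.map ψR
    rw [him] at this
    exact zero_ne_one (isUnit_zero_iff.mp this)
  -- `β` is a unit
  have hβunit : IsUnit β := by
    have hψβ : ψS β ≠ 0 := by rw [hβx]; exact hne
    obtain ⟨c, hc⟩ := hψSsurj (ψS β)⁻¹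
    have hc0 : ψS (β * c - 1) = 0 := by
      rw [map_sub, map_mul, hc, mul_inv_cancel₀ hψβ, map_one, sub_self]
    have hmem : β * c - 1 ∈ Ideal.span {(p : AdjoinRoot ρ)} := by
      rw [← hψSker]; exact hc0
    obtain ⟨t, ht⟩ := Ideal.mem_span_singleton.mp hmem
    have hbc : β * c = 1 + (p : AdjoinRoot ρ) * t := by rw [← ht]; ring
    have hu : IsUnit (β * c) := by
      rw [hbc]
      exact IsNilpotent.isUnit_one_add ⟨n, by rw [mul_pow, hpS, zero_mul]⟩
    exact isUnit_of_mul_isUnit_left hu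
  -- the powers of `β` span modulo `p`, hence span by Nakayama
  have hdiff : ∀ i : ℕ, ∃ t : AdjoinRoot ρ, x ^ i = β ^ i + (p : AdjoinRoot ρ) * t := by
    intro i
    have h3 : (p : AdjoinRoot ρ) ∣ x - β := by
      rw [← Ideal.mem_span_singleton, ← hψSker, RingHom.mem_ker, map_sub, hβx, sub_self]
    obtain ⟨t, ht⟩ := dvd_trans h3 (sub_dvd_pow_sub_pow x β i)
    exact ⟨t, by rw [← ht]; ring⟩
  let v : Fin l → AdjoinRoot ρ := fun i => β ^ (i : ℕ)
  haveI : Module.Finite (AdjoinRoot f) (AdjoinRoot ρ) := Module.Finite.of_basis b0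
  have hspan : Submodule.span (AdjoinRoot f) (Set.range v) = ⊤ := by
    have hjac : Ideal.span {(p : AdjoinRoot f)} ≤ Ideal.jacobson ⊥ := by
      rw [Ideal.span_le, Set.singleton_subset_iff, SetLike.mem_coe, Ideal.mem_jacobson_bot]
      intro y
      have hnil : IsNilpotent ((p : AdjoinRoot f) * y) :=
        ⟨n, by rw [mul_pow, hpR, zero_mul]⟩
      rw [add_comm]
      exact hnil.isUnit_one_add
    have htop : (⊤ : Submodule (AdjoinRoot f) (AdjoinRoot ρ)) ≤
        Submodule.span (AdjoinRoot f) (Set.range v) ⊔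
          (Ideal.span {(p : AdjoinRoot f)}) • (⊤ : Submodule (AdjoinRoot f) (AdjoinRoot ρ)) := by
      conv_lhs => rw [← b0.span_eq]
      rw [Submodule.span_le]
      rintro _ ⟨i, rfl⟩
      obtain ⟨t, ht⟩ := hdiff (i : ℕ)
      rw [SetLike.mem_coe, hb0 i, ht]
      refine Submodule.add_mem_sup (Submodule.subset_span ⟨i, rfl⟩) ?_
      have hpt : (p : AdjoinRoot ρ) * t = (p : AdjoinRoot f) • t := by
        rw [Algebra.smul_def, map_natCast]
      rw [hpt]
      exact Submodule.smul_mem_smul (Ideal.mem_span_singleton.mpr dvd_rfl) Submodule.mem_top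
    have hfg : (⊤ : Submodule (AdjoinRoot f) (AdjoinRoot ρ)).FG := Module.Finite.fg_top
    have hle := Submodule.le_of_le_smul_of_le_jacobson_bot hfg hjac htop
    exact top_le_iff.mp hle
  haveI : Nonempty (Fin l) := ⟨⟨0, hl⟩⟩
  let φL : AdjoinRoot ρ →ₗ[AdjoinRoot f] AdjoinRoot ρ := b0.constr ℕ v
  have hsurjL : Function.Surjective φL := by
    rw [← LinearMap.range_eq_top, b0.constr_range, hspan]
  have hinjL : Function.Injective φL :=
    OrzechProperty.injective_of_surjective_endomorphism φL hsurjL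
  let eL := LinearEquiv.ofBijective φL ⟨hinjL, hsurjL⟩
  refine ⟨β, ?_, b0.map eL, ?_⟩
  · have hstep : β * β ^ (q - 1) = β * 1 := by
      rw [mul_one, ← pow_succ', Nat.sub_add_cancel hq1]
      exact hβq
    exact hβunit.mul_left_cancel hstep
  · intro i
    rw [Module.Basis.map_apply]
    show φL (b0 i) = β ^ (i : ℕ)
    exact b0.constr_basis ℕ v i
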